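/- arXiv:1305.5690 — 2 statements merged into one kernel-verified Lean document; each statement's English description precedes it below -/
import Mathlib

section
/- Let ℓ be a prime, let M be a module over the polynomial ring (ℤ/ℓ)[τ] with no τ-torsion (i.e. τ·x = 0 implies x = 0), and let A ⊆ M be a (ℤ/ℓ)[τ]-submodule. Suppose: (i) the induced map A/τA → M/τM is injective, and (ii) for every x ∈ M there exists n ≥ 0 with τⁿ·x ∈ A. Then A = M. -/
/-- Let `ℓ` be a prime, `M` a module over `(ℤ/ℓ)[τ]` with no `τ`-torsion,
and `A ⊆ M` a submodule such that `A/τA → M/τM` is injective (equivalently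
`A ∩ τM ⊆ τA`) and every `x ∈ M` satisfies `τ^n • x ∈ A` for some `n`. Then `A = M`. -/
theorem submodule_eq_top_of_tau_conditions
    (ℓ : ℕ) [Fact ℓ.Prime]
    (M : Type*) [AddCommGroup M] [Module (Polynomial (ZMod ℓ)) M]
    (htf : ∀ x : M, (Polynomial.X : Polynomial (ZMod ℓ)) • x = 0 → x = 0)
    (A : Submodule (Polynomial (ZMod ℓ)) M)
    (hinj : ∀ a ∈ A, (∃ m : M, (Polynomial.X : Polynomial (ZMod ℓ)) • m = a) →
      ∃ b ∈ A, (Polynomial.X : Polynomial (ZMod ℓ)) • b = a)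
    (hloc : ∀ x : M, ∃ n : ℕ, ((Polynomial.X : Polynomial (ZMod ℓ)) ^ n) • x ∈ A) :
    A = ⊤ := by
  have key : ∀ n : ℕ, ∀ x : M, ((Polynomial.X : Polynomial (ZMod ℓ)) ^ n) • x ∈ A → x ∈ A := by
    intro n
    induction n with
    | zero => intro x hx; simpa using hx
    | succ n ih =>
      intro x hx
      apply ih
      set y := ((Polynomial.X : Polynomial (ZMod ℓ)) ^ n) • x with hy
      have hxy : (Polynomial.X : Polynomial (ZMod ℓ)) • y ∈ A := by
        rw [hy, ← mul_smul, ← pow_succ']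
        exact hx
      obtain ⟨b, hbA, hb⟩ := hinj _ hxy ⟨y, rfl⟩
      have heq : y = b := sub_eq_zero.mp (htf (y - b) (by rw [smul_sub, hb, sub_self]))
      rwa [heq]
  rw [eq_top_iff]
  intro x _
  obtain ⟨n, hn⟩ := hloc x
  exact key n x hn
end

section
/- Let p be a prime and let Γ = 𝔽_p[ξ₁, ξ₂, ξ₃, …] be the polynomial algebra over the field with p elements on countably many generators. Define the algebra homomorphism Δ : Γ → Γ ⊗ Γ by Δ(ξ_r) = Σ_{i=0}^{r} ξ_{r−i}^{p^i} ⊗ ξ_i, where ξ₀ = 1. Then Δ is coassociative: (Δ ⊗ id)∘Δ = (id ⊗ Δ)∘Δ. -/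
open TensorProduct

/-- The generators `ξ_r` of the dual Steenrod algebra `Γ = 𝔽_p[ξ₁, ξ₂, …]`,
with the convention `ξ₀ = 1` (so `ξ_{r+1}` is the polynomial generator `X r`). -/
noncomputable def dualSteenrodXi (p : ℕ) (r : ℕ) : MvPolynomial ℕ (ZMod p) :=
  if r = 0 then 1 else MvPolynomial.X (r - 1)

/-- The Milnor coproduct `Δ : Γ → Γ ⊗ Γ`, the unique `𝔽_p`-algebra map with
`Δ(ξ_r) = Σ_{i=0}^{r} ξ_{r−i}^{p^i} ⊗ ξ_i`. -/
noncomputable def dualSteenrodCoproduct (p : ℕ) :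
    MvPolynomial ℕ (ZMod p) →ₐ[ZMod p]
      MvPolynomial ℕ (ZMod p) ⊗[ZMod p] MvPolynomial ℕ (ZMod p) :=
  MvPolynomial.aeval fun n =>
    ∑ i ∈ Finset.range (n + 2),
      ((dualSteenrodXi p (n + 1 - i)) ^ (p ^ i)) ⊗ₜ[ZMod p] dualSteenrodXi p i

/-- Reindexing a triangular double sum. -/
lemma dualSteenrod_triangle_sum {M : Type*} [AddCommMonoid M] (N : ℕ) (f : ℕ → ℕ → M) :
    ∑ i ∈ Finset.range (N + 1), ∑ j ∈ Finset.range (N - i + 1), f i j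
      = ∑ i ∈ Finset.range (N + 1), ∑ k ∈ Finset.range (i + 1), f k (i - k) := by
  rw [Finset.sum_sigma', Finset.sum_sigma']
  refine Finset.sum_nbij' (fun x => (⟨x.1 + x.2, x.1⟩ : Σ _ : ℕ, ℕ))
    (fun x => (⟨x.2, x.1 - x.2⟩ : Σ _ : ℕ, ℕ)) ?_ ?_ ?_ ?_ ?_ <;>
    rintro ⟨a, b⟩ h <;>
    simp only [Finset.mem_sigma, Finset.mem_range] at h ⊢
  · omega
  · omega
  · refine Sigma.ext ?_ ?_ <;> simp <;> omega
  · refine Sigma.ext ?_ ?_ <;> simp <;> omega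
  · congr 1; omega

/-- The coproduct formula on all `ξ_r`, including `r = 0`. -/
lemma dualSteenrodCoproduct_xi (p : ℕ) (r : ℕ) :
    dualSteenrodCoproduct p (dualSteenrodXi p r) =
      ∑ i ∈ Finset.range (r + 1),
        ((dualSteenrodXi p (r - i)) ^ (p ^ i)) ⊗ₜ[ZMod p] dualSteenrodXi p i := by
  cases r with
  | zero => simp [dualSteenrodXi, Algebra.TensorProduct.one_def]
  | succ n => simp [dualSteenrodXi, dualSteenrodCoproduct]

/-- The Milnor coproduct on the dual Steenrod algebra is coassociative. -/
theorem dualSteenrodCoproduct_coassoc (p : ℕ) [Fact p.Prime] :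
    (Algebra.TensorProduct.assoc (ZMod p) (ZMod p) (ZMod p) (MvPolynomial ℕ (ZMod p))
        (MvPolynomial ℕ (ZMod p)) (MvPolynomial ℕ (ZMod p))).toAlgHom.comp
      ((Algebra.TensorProduct.map (dualSteenrodCoproduct p)
          (AlgHom.id (ZMod p) (MvPolynomial ℕ (ZMod p)))).comp (dualSteenrodCoproduct p)) =
    (Algebra.TensorProduct.map (AlgHom.id (ZMod p) (MvPolynomial ℕ (ZMod p)))
        (dualSteenrodCoproduct p)).comp (dualSteenrodCoproduct p) := by
  set Γ := MvPolynomial ℕ (ZMod p)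
  haveI : ExpChar (Γ ⊗[ZMod p] Γ) p := by
    haveI : CharP (Γ ⊗[ZMod p] Γ) p :=
      charP_of_injective_algebraMap (algebraMap (ZMod p) (Γ ⊗[ZMod p] Γ)).injective p
    exact ExpChar.prime (Fact.out)
  apply MvPolynomial.algHom_ext
  intro n
  have hX : (MvPolynomial.X n : Γ) = dualSteenrodXi p (n + 1) := by
    simp [dualSteenrodXi]
  simp only [AlgHom.comp_apply, hX, dualSteenrodCoproduct_xi, map_sum,
    AlgEquiv.toAlgHom_eq_coe, AlgHom.coe_coe, Algebra.TensorProduct.map_tmul, AlgHom.coe_id,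
    id_eq, map_pow, dualSteenrodCoproduct_xi, sum_pow_char_pow, Algebra.TensorProduct.tmul_pow,
    ← pow_mul, ← pow_add, TensorProduct.sum_tmul, Algebra.TensorProduct.assoc_tmul,
    TensorProduct.tmul_sum]
  simp only [AlgEquiv.coe_algHom, Algebra.TensorProduct.assoc_tmul]
  rw [dualSteenrod_triangle_sum (n + 1) (fun i j =>
    ((dualSteenrodXi p (n + 1 - i - j)) ^ (p ^ (j + i))) ⊗ₜ[ZMod p]
      (((dualSteenrodXi p j) ^ (p ^ i)) ⊗ₜ[ZMod p] dualSteenrodXi p i))]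
  refine Finset.sum_congr rfl fun i hi => Finset.sum_congr rfl fun k hk => ?_
  simp only [Finset.mem_range] at hi hk
  have h1 : i - k + k = i := by omega
  have h2 : n + 1 - k - (i - k) = n + 1 - i := by omega
  rw [h1, h2]
end
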